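/- The Abelian complexity of the Tribonacci word satisfies ρ(1) = 3, ρ(2) = 3, ρ(3) = 4, and ρ(4) = 3. -/

import Mathlib

/-- The Tribonacci morphism τ: 0↦01, 1↦02, 2↦0, extended to words. -/
def tau : List (Fin 3) → List (Fin 3) :=
  fun w => w.flatMap (fun a => if a = 0 then [0, 1] else if a = 1 then [0, 2] else [0])

/-- The Tribonacci word, the fixed point of τ starting with 0.
Since τⁿ(0) is a prefix of τⁿ⁺¹(0) and |τ^(n+1)(0)| > n, this is well defined. -/
def trib : ℕ → Fin 3 := fun n => (tau^[n + 1] [0]).getD n 0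

/-- `u` is a (finite, contiguous) factor of the Tribonacci word. -/
def IsFactor (u : List (Fin 3)) : Prop :=
  ∃ i : ℕ, u = (List.range u.length).map (fun j => trib (i + j))

noncomputable def rho (n : ℕ) : ℕ :=
  Set.ncard {v : Fin 3 → ℕ | ∃ u : List (Fin 3), IsFactor u ∧ u.length = n ∧
    ∀ a : Fin 3, u.count a = v a}

/-- single-letter block -/
def blk (a : Fin 3) : List (Fin 3) := if a = 0 then [0, 1] else if a = 1 then [0, 2] else [0]

lemma tau_eq (w : List (Fin 3)) : tau w = w.flatMap blk := rfl

lemma tau_append (a b : List (Fin 3)) : tau (a ++ b) = tau a ++ tau b :=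
  List.flatMap_append

lemma tau_cons (a : Fin 3) (w : List (Fin 3)) : tau (a :: w) = blk a ++ tau w := rfl

lemma tau_singleton (a : Fin 3) : tau [a] = blk a := by
  simp [tau_eq, List.flatMap]

lemma blk_length_pos (a : Fin 3) : 0 < (blk a).length := by
  fin_cases a <;> simp [blk]

lemma length_le_tau (w : List (Fin 3)) : w.length ≤ (tau w).length := by
  induction w with
  | nil => simp [tau_eq]
  | cons a w ih =>
    rw [tau_cons, List.length_append, List.length_cons]
    have := blk_length_pos a
    omega

def pref (k : ℕ) : List (Fin 3) := tau^[k] [0]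

lemma pref_zero : pref 0 = [0] := rfl

lemma pref_succ (k : ℕ) : pref (k + 1) = tau (pref k) := Function.iterate_succ_apply' tau k [0]

lemma tau_prefix_mono {a b : List (Fin 3)} (h : a <+: b) : tau a <+: tau b := by
  obtain ⟨c, rfl⟩ := h
  rw [tau_append]
  exact List.prefix_append _ _

lemma pref_prefix_succ (k : ℕ) : pref k <+: pref (k + 1) := by
  induction k with
  | zero => exact ⟨[1], rfl⟩
  | succ k ih => rw [pref_succ, pref_succ (k+1)]; exact tau_prefix_mono ih

lemma pref_prefix {k m : ℕ} (h : k ≤ m) : pref k <+: pref m := by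
  induction m with
  | zero => simpa [Nat.le_zero.mp h]
  | succ m ih =>
    rcases Nat.lt_or_ge k (m+1) with h' | h'
    · exact (ih (by omega)).trans (pref_prefix_succ m)
    · have : k = m + 1 := by omega
      subst this; exact List.prefix_refl _

lemma pref_length (k : ℕ) : k + 1 ≤ (pref k).length := by
  induction k with
  | zero => simp [pref_zero]
  | succ k ih =>
    obtain ⟨c, hc⟩ := pref_prefix (Nat.zero_le k)
    rw [pref_zero] at hc
    rw [pref_succ, ← hc]
    have h1 : tau ([(0:Fin 3)] ++ c) = [0, 1] ++ tau c := rfl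
    have h2 := length_le_tau c
    have h3 : (pref k).length = 1 + c.length := by rw [← hc]; simp; omega
    rw [h1, List.length_append]
    simp only [List.length_cons, List.length_nil]
    omega

lemma getD_prefix {a b : List (Fin 3)} (h : a <+: b) {n : ℕ} (hn : n < a.length) :
    a.getD n 0 = b.getD n 0 := by
  obtain ⟨c, rfl⟩ := h
  rw [List.getD_eq_getElem _ _ hn, List.getD_eq_getElem _ _ (by simp; omega)]
  exact (List.getElem_append_left hn).symm

lemma trib_eq {k n : ℕ} (hn : n < (pref k).length) : trib n = (pref k).getD n 0 := by
  have h1 : n < (pref (n+1)).length := by have := pref_length (n+1); omega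
  show (pref (n+1)).getD n 0 = (pref k).getD n 0
  rcases Nat.le_total k (n+1) with h | h
  · rw [← getD_prefix (pref_prefix h) hn]
  · rw [getD_prefix (pref_prefix h) h1]

lemma isFactor_iff (u : List (Fin 3)) : IsFactor u ↔ ∃ k, u <:+: pref k := by
  constructor
  · rintro ⟨i, hu⟩
    set K := i + u.length with hK
    refine ⟨K, ?_⟩
    have hlen : K + 1 ≤ (pref K).length := pref_length _
    have heq : u = ((pref K).drop i).take u.length := by
      apply List.ext_getElem
      · simp; omega
      · intro j hj _
        have hij : i + j < (pref K).length := by omega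
        have h1 : u[j] = trib (i + j) := by
          have := List.getElem_of_eq hu hj
          simpa using this
        rw [h1, trib_eq hij]
        rw [List.getElem_take, List.getElem_drop]
        exact List.getD_eq_getElem _ _ hij
    conv_lhs => rw [heq]
    exact ((List.take_prefix _ _).isInfix).trans (List.drop_suffix _ _).isInfix
  · rintro ⟨k, s, t, hst⟩
    refine ⟨s.length, ?_⟩
    apply List.ext_getElem (by simp)
    intro j hj _
    simp only [List.getElem_map, List.getElem_range]
    have hlt : s.length + j < (pref k).length := by
      rw [← hst]; simp; omega
    rw [trib_eq hlt]
    conv_rhs => rw [← hst]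
    rw [List.append_assoc, List.getD_append_right _ _ _ _ (by omega)]
    rw [Nat.add_sub_cancel_left, List.getD_append _ _ _ _ hj]
    exact (List.getD_eq_getElem _ _ hj).symm

/-- Decompose an infix of an append. -/
lemma infix_append_decomp {u A B : List (Fin 3)} (h : u <:+: A ++ B) :
    u <:+: A ∨ u <:+: B ∨
      ∃ u1 u2, u = u1 ++ u2 ∧ u1 ≠ [] ∧ u2 ≠ [] ∧ u1 <:+ A ∧ u2 <+: B := by
  obtain ⟨s, t, hst⟩ := h
  by_cases h1 : s.length + u.length ≤ A.length
  · left
    have hA : A = (s ++ u ++ t).take A.length := by rw [hst]; simp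
    rw [List.append_assoc, List.take_append,
      List.take_of_length_le (show s.length ≤ A.length by omega),
      List.take_append,
      List.take_of_length_le (show u.length ≤ A.length - s.length by omega)] at hA
    exact ⟨s, _, by rw [hA, List.append_assoc]⟩
  by_cases h2 : A.length ≤ s.length
  · right; left
    have hB : B = (s ++ u ++ t).drop A.length := by rw [hst]; simp
    rw [List.append_assoc, List.drop_append,
      (show A.length - s.length = 0 by omega), List.drop_zero] at hB
    exact ⟨s.drop A.length, t, by rw [hB, List.append_assoc]⟩
  · right; right
    have hA : A = (s ++ u ++ t).take A.length := by rw [hst]; simp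
    rw [List.append_assoc, List.take_append,
      List.take_of_length_le (show s.length ≤ A.length by omega),
      List.take_append,
      (show A.length - s.length - u.length = 0 by omega), List.take_zero,
      List.append_nil] at hA
    have hB : B = (s ++ u ++ t).drop A.length := by rw [hst]; simp
    rw [List.append_assoc, List.drop_append,
      List.drop_of_length_le (show s.length ≤ A.length by omega), List.nil_append,
      List.drop_append,
      (show A.length - s.length - u.length = 0 by omega), List.drop_zero] at hB
    refine ⟨u.take (A.length - s.length), u.drop (A.length - s.length),
      (List.take_append_drop _ u).symm, ?_, ?_, ⟨s, hA.symm⟩, ⟨t, hB.symm⟩⟩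
    · intro hnil
      have := congrArg List.length hnil
      simp only [List.length_take, List.length_nil] at this
      omega
    · intro hnil
      have := congrArg List.length hnil
      simp at this
      omega

/-- Descent for prefixes: a nonempty prefix of τ(w) is a prefix of τ(v) for a short prefix v of w. -/
lemma prefix_descent : ∀ (w u : List (Fin 3)), u <+: tau w → u ≠ [] →
    ∃ v, v <+: w ∧ v.length ≤ u.length ∧ u <+: tau v := by
  intro w
  induction w with
  | nil =>
    intro u hu hne
    rw [show tau [] = [] from rfl] at hu
    exact absurd (List.prefix_nil.mp hu) hne
  | cons a w ih =>
    intro u hu hne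
    rw [tau_cons] at hu
    by_cases hlen : u.length ≤ (blk a).length
    · -- u is a prefix of blk a
      have hba : blk a <+: blk a ++ tau w := List.prefix_append _ _
      have hub : u <+: blk a := List.prefix_of_prefix_length_le hu hba hlen
      refine ⟨[a], ⟨w, rfl⟩, ?_, by rwa [tau_singleton]⟩
      have : 0 < u.length := List.length_pos_iff.mpr hne
      simp; omega
    · push_neg at hlen
      have hba : blk a <+: blk a ++ tau w := List.prefix_append _ _
      have hbu : blk a <+: u := List.prefix_of_prefix_length_le hba hu (by omega)
      obtain ⟨u', rfl⟩ := hbu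
      have hu' : u' <+: tau w := by
        obtain ⟨c, hc⟩ := hu
        rw [List.append_assoc] at hc
        exact ⟨c, (List.append_cancel_left hc)⟩
      by_cases hne' : u' = []
      · subst hne'
        refine ⟨[a], ⟨w, rfl⟩, ?_, by rw [tau_singleton]; simp⟩
        have := blk_length_pos a
        simp
        omega
      · obtain ⟨v', hv'w, hv'l, hv'p⟩ := ih u' hu' hne'
        refine ⟨a :: v', ?_, ?_, ?_⟩
        · obtain ⟨c, hc⟩ := hv'w
          exact ⟨c, by rw [← hc]; rfl⟩
        · have := blk_length_pos a
          simp at hv'l ⊢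
          omega
        · rw [tau_cons]
          obtain ⟨c, hc⟩ := hv'p
          exact ⟨c, by rw [← hc, List.append_assoc]⟩

/-- Descent for infixes. -/
lemma infix_descent : ∀ (w u : List (Fin 3)), u <:+: tau w → u ≠ [] →
    ∃ v, v <:+: w ∧ v.length ≤ u.length ∧ u <:+: tau v := by
  intro w
  induction w with
  | nil =>
    intro u hu hne
    rw [show tau [] = [] from rfl] at hu
    exact absurd (List.eq_nil_of_infix_nil hu) hne
  | cons a w ih =>
    intro u hu hne
    rw [tau_cons] at hu
    rcases infix_append_decomp hu with h | h | ⟨u1, u2, rfl, h1ne, h2ne, h1s, h2p⟩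
    · refine ⟨[a], (show [a] <+: a :: w from ⟨w, rfl⟩).isInfix, ?_,
        by rwa [tau_singleton]⟩
      have : 0 < u.length := List.length_pos_iff.mpr hne
      simp; omega
    · obtain ⟨v, hvw, hvl, hvp⟩ := ih u h hne
      exact ⟨v, hvw.trans (List.infix_cons (List.infix_refl w)), hvl, hvp⟩
    · obtain ⟨v2, hv2w, hv2l, hv2p⟩ := prefix_descent w u2 h2p h2ne
      refine ⟨a :: v2, ?_, ?_, ?_⟩
      · have : a :: v2 <+: a :: w := by
          obtain ⟨c, hc⟩ := hv2w
          exact ⟨c, by rw [← hc]; rfl⟩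
        exact this.isInfix
      · have : 0 < u1.length := List.length_pos_iff.mpr h1ne
        simp at hv2l ⊢
        omega
      · rw [tau_cons]
        obtain ⟨s, hs⟩ := h1s
        obtain ⟨c, hc⟩ := hv2p
        exact ⟨s, c, by rw [← hs, ← hc]; simp [List.append_assoc]⟩

def S : List (List (Fin 3)) :=
  [[], [0], [1], [2],
   [0, 0], [0, 1], [0, 2], [1, 0], [2, 0],
   [0, 0, 1], [0, 1, 0], [0, 2, 0], [1, 0, 0], [1, 0, 1], [1, 0, 2], [2, 0, 1],
   [0, 0, 1, 0], [0, 1, 0, 0], [0, 1, 0, 1], [0, 1, 0, 2], [0, 2, 0, 1],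
   [1, 0, 0, 1], [1, 0, 1, 0], [1, 0, 2, 0], [2, 0, 1, 0]]

def infixList (l : List (Fin 3)) : List (List (Fin 3)) := l.tails.flatMap List.inits

lemma mem_infixList {u l : List (Fin 3)} : u ∈ infixList l ↔ u <:+: l := by
  simp only [infixList, List.mem_flatMap, List.mem_tails, List.mem_inits]
  rw [List.infix_iff_prefix_suffix]
  tauto

lemma closure_step : ∀ v ∈ S, ∀ u ∈ infixList (tau v), u.length ≤ 4 → u ∈ S := by decide

lemma factors_in_S : ∀ k, ∀ u, u <:+: pref k → u.length ≤ 4 → u ∈ S := by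
  intro k
  induction k with
  | zero =>
    intro u hu _
    rw [pref_zero] at hu
    have base : ∀ u ∈ infixList ([0] : List (Fin 3)), u ∈ S := by decide
    exact base u (mem_infixList.mpr hu)
  | succ k ih =>
    intro u hu hl
    rw [pref_succ] at hu
    by_cases hne : u = []
    · subst hne; decide
    · obtain ⟨v, hvw, hvl, hvp⟩ := infix_descent (pref k) u hu hne
      exact closure_step v (ih v hvw (by omega)) u (mem_infixList.mpr hvp) hl

def PV (u : List (Fin 3)) : Fin 3 → ℕ := fun a => u.count a

lemma rho_eq (n : ℕ) (P : Finset (Fin 3 → ℕ))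
    (hS : ∀ u ∈ S, u.length = n → PV u ∈ P)
    (hW : ∀ v ∈ P, ∃ u : List (Fin 3), (∃ k, u <:+: pref k) ∧ u.length = n ∧ PV u = v)
    (hn : n ≤ 4) :
    rho n = P.card := by
  have hset : {v : Fin 3 → ℕ | ∃ u : List (Fin 3), IsFactor u ∧ u.length = n ∧
      ∀ a : Fin 3, u.count a = v a} = ↑P := by
    ext v
    simp only [Set.mem_setOf_eq, Finset.mem_coe]
    constructor
    · rintro ⟨u, hf, hl, hc⟩
      obtain ⟨k, hinf⟩ := (isFactor_iff u).mp hf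
      have hu : u ∈ S := factors_in_S k u hinf (by omega)
      have hpv : PV u = v := funext hc
      rw [← hpv]
      exact hS u hu hl
    · intro hv
      obtain ⟨u, hf, hl, hpv⟩ := hW v hv
      exact ⟨u, (isFactor_iff u).mpr hf, hl, fun a => by rw [← hpv]; rfl⟩
  rw [rho, hset, Set.ncard_coe_finset]

lemma rho_one : rho 1 = 3 := by
  rw [rho_eq 1 {![1,0,0], ![0,1,0], ![0,0,1]} (by decide) ?_ (by norm_num)]
  · decide
  · intro v hv
    fin_cases hv
    · exact ⟨[0], ⟨5, by decide⟩, by decide, by decide⟩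
    · exact ⟨[1], ⟨5, by decide⟩, by decide, by decide⟩
    · exact ⟨[2], ⟨5, by decide⟩, by decide, by decide⟩

lemma rho_two : rho 2 = 3 := by
  rw [rho_eq 2 {![2,0,0], ![1,1,0], ![1,0,1]} (by decide) ?_ (by norm_num)]
  · decide
  · intro v hv
    fin_cases hv
    · exact ⟨[0,0], ⟨5, by decide⟩, by decide, by decide⟩
    · exact ⟨[0,1], ⟨5, by decide⟩, by decide, by decide⟩
    · exact ⟨[0,2], ⟨5, by decide⟩, by decide, by decide⟩

lemma rho_three : rho 3 = 4 := by
  rw [rho_eq 3 {![1,1,1], ![1,2,0], ![2,0,1], ![2,1,0]} (by decide) ?_ (by norm_num)]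
  · decide
  · intro v hv
    fin_cases hv
    · exact ⟨[1,0,2], ⟨5, by decide⟩, by decide, by decide⟩
    · exact ⟨[1,0,1], ⟨5, by decide⟩, by decide, by decide⟩
    · exact ⟨[0,2,0], ⟨5, by decide⟩, by decide, by decide⟩
    · exact ⟨[0,1,0], ⟨5, by decide⟩, by decide, by decide⟩

lemma rho_four : rho 4 = 3 := by
  rw [rho_eq 4 {![2,1,1], ![2,2,0], ![3,1,0]} (by decide) ?_ (by norm_num)]
  · decide
  · intro v hv
    fin_cases hv
    · exact ⟨[0,1,0,2], ⟨5, by decide⟩, by decide, by decide⟩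
    · exact ⟨[0,1,0,1], ⟨5, by decide⟩, by decide, by decide⟩
    · exact ⟨[0,1,0,0], ⟨5, by decide⟩, by decide, by decide⟩

theorem tribonacci_abelian_complexity_small_values :
    rho 1 = 3 ∧ rho 2 = 3 ∧ rho 3 = 4 ∧ rho 4 = 3 := by
  exact ⟨rho_one, rho_two, rho_three, rho_four⟩
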